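/- Let q > 1 be real and n ≥ 1, d integers with 0 ≤ d ≤ n−1. Then, as an identity of polynomials in x (equivalently, for all real x): Σ_{r=0}^{n} (−1)^{n−r} q^{binom(n−r,2)} ( [n choose r]_q + ((1−q)[n]_q/[r]!_q) · Σ_{j=1}^{n−max(r,d)} q^{jr−d} · ([n−j]!_q/[n−r−j]!_q) · (q^{n−d−j+1}; q)_{j−1} ) · x^r = (∏_{i=0}^{n−1}(q^n − q^i)) · ( (x;q^{−1})_n/(q;q)_n + q^{−d} · Σ_{m=d}^{n−1} ([m]!_q·[n−d−1]!_q)/([m−d]!_q·[n−1]!_q) · (x;q^{−1})_m/(q;q)_m ). -/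

import Mathlib

/-- The `q`-Pochhammer symbol `(a; q)_m = ∏_{i=0}^{m-1} (1 - a q^i)` over `ℝ`. -/
noncomputable def qPoch (a q : ℝ) (m : ℕ) : ℝ := ∏ i ∈ Finset.range m, (1 - a * q ^ i)

/-- The `q`-integer `[m]_q = 1 + q + ⋯ + q^{m-1}`. -/
noncomputable def qInt (q : ℝ) (m : ℕ) : ℝ := ∑ i ∈ Finset.range m, q ^ i

/-- The `q`-factorial `[m]!_q = [1]_q [2]_q ⋯ [m]_q`. -/
noncomputable def qFact (q : ℝ) (m : ℕ) : ℝ := ∏ i ∈ Finset.range m, qInt q (i + 1)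

/-- The `q`-binomial coefficient `[n choose k]_q = [n]!_q / ([k]!_q [n-k]!_q)`. -/
noncomputable def qBinom (q : ℝ) (n k : ℕ) : ℝ := qFact q n / (qFact q k * qFact q (n - k))

open Finset

section Aux

lemma qInt_pos {q : ℝ} (hq : 1 < q) {m : ℕ} (hm : 1 ≤ m) : 0 < qInt q m := by
  have h0 : (0:ℝ) < q := by linarith
  exact Finset.sum_pos (fun i _ => pow_pos h0 i) (by simp [Finset.nonempty_range_iff]; omega)

lemma qFact_pos {q : ℝ} (hq : 1 < q) (m : ℕ) : 0 < qFact q m :=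
  Finset.prod_pos fun i _ => qInt_pos hq (by omega)

lemma qFact_ne {q : ℝ} (hq : 1 < q) (m : ℕ) : qFact q m ≠ 0 := (qFact_pos hq m).ne'

lemma one_sub_pow (q : ℝ) (k : ℕ) : 1 - q ^ k = (1 - q) * qInt q k := by
  have := geom_sum_mul q k
  unfold qInt
  nlinarith [this]

lemma qInt_add (q : ℝ) (a b : ℕ) : qInt q (a + b) = qInt q a + q ^ a * qInt q b := by
  unfold qInt
  rw [Finset.sum_range_add, Finset.mul_sum]
  simp [pow_add]

lemma qFact_succ (q : ℝ) (m : ℕ) : qFact q (m + 1) = qFact q m * qInt q (m + 1) :=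
  Finset.prod_range_succ _ m

lemma qPoch_q_q (q : ℝ) (m : ℕ) : qPoch q q m = (1 - q) ^ m * qFact q m := by
  unfold qPoch qFact
  rw [← Finset.card_range m, ← Finset.prod_const (1-q), Finset.card_range,
    ← Finset.prod_mul_distrib]
  refine Finset.prod_congr rfl fun i _ => ?_
  have : 1 - q * q ^ i = 1 - q ^ (i+1) := by ring
  rw [this, one_sub_pow]

lemma qPoch_q_q_ne {q : ℝ} (hq : 1 < q) (m : ℕ) : qPoch q q m ≠ 0 := by
  rw [qPoch_q_q]
  exact mul_ne_zero (pow_ne_zero _ (by linarith)) (qFact_ne hq m)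

lemma qFact_add (q : ℝ) (a k : ℕ) :
    qFact q (a + k) = qFact q a * ∏ i ∈ range k, qInt q (a + 1 + i) := by
  unfold qFact
  rw [Finset.prod_range_add]
  congr 1; refine Finset.prod_congr rfl fun i _ => ?_; congr 1; omega

lemma qPoch_qpow {q : ℝ} (hq : 1 < q) (a k : ℕ) :
    qPoch (q ^ (a + 1)) q k = (1 - q) ^ k * (qFact q (a + k) / qFact q a) := by
  rw [qFact_add q a k, mul_comm (qFact q a), mul_div_assoc, div_self (qFact_ne hq a), mul_one]
  unfold qPoch
  rw [← Finset.card_range k, ← Finset.prod_const (1-q), Finset.card_range,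
    ← Finset.prod_mul_distrib]
  refine Finset.prod_congr rfl fun i _ => ?_
  rw [← pow_add, one_sub_pow]

lemma gl_prod {q : ℝ} (hq : 1 < q) (n : ℕ) :
    ∏ i ∈ range n, (q ^ n - q ^ i) = (-1) ^ n * q ^ n.choose 2 * (1 - q) ^ n * qFact q n := by
  have h1 : ∀ i ∈ range n, q ^ n - q ^ i = q ^ i * (-(1-q) * qInt q (n - i)) := by
    intro i hi
    simp only [mem_range] at hi
    have : q ^ n - q ^ i = q ^ i * (q ^ (n-i) - 1) := by
      rw [mul_sub, mul_one, ← pow_add]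
      congr 2; omega
    rw [this]; congr 1
    have := one_sub_pow q (n - i)
    linarith
  rw [Finset.prod_congr rfl h1, Finset.prod_mul_distrib, Finset.prod_mul_distrib]
  rw [Finset.prod_pow_eq_pow_sum]
  have h2 : ∑ i ∈ range n, i = n.choose 2 := by
    rw [Finset.sum_range_id, Nat.choose_two_right]
  rw [h2, Finset.prod_const, Finset.card_range]
  have h3 : ∏ i ∈ range n, qInt q (n - i) = qFact q n := by
    unfold qFact
    rw [← Finset.prod_range_reflect]
    refine Finset.prod_congr rfl fun i hi => ?_
    simp only [mem_range] at hi
    congr 1; omega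
  rw [h3, neg_pow]
  ring

lemma choose_two_add (x y : ℕ) : (x + y).choose 2 = x.choose 2 + y.choose 2 + x * y := by
  induction y with
  | zero => simp
  | succ k ih =>
    have h1 : x + (k+1) = (x + k) + 1 := by omega
    have h2 : ∀ a : ℕ, (a+1).choose 2 = a.choose 2 + a := by
      intro a; rw [Nat.choose_succ_succ, Nat.choose_one_right]; exact Nat.add_comm _ _
    rw [h1, h2, ih, h2]; ring

lemma choose_two_succ (k : ℕ) : (k+1).choose 2 = k.choose 2 + k := by
  rw [Nat.choose_succ_succ, Nat.choose_one_right]; exact Nat.add_comm _ _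

lemma qPascal {q : ℝ} (hq : 1 < q) {m r : ℕ} (h : r < m) :
    qBinom q (m+1) (r+1) = q^(r+1) * qBinom q m (r+1) + qBinom q m r := by
  have key : qInt q (m+1) = qInt q (r+1) + q^(r+1) * qInt q (m-r) := by
    rw [← qInt_add]; congr 1; omega
  unfold qBinom
  have e1 : m + 1 - (r+1) = m - r := by omega
  have e2 : m - (r+1) = (m - r) - 1 := by omega
  have e3 : m - r = (m - r - 1) + 1 := by omega
  rw [e1, e2, qFact_succ q m]
  rw [show qFact q (m - r) = qFact q (m - r - 1) * qInt q (m - r) by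
    conv_lhs => rw [e3, qFact_succ]
    rw [← e3]]
  rw [show qFact q (r + 1) = qFact q r * qInt q (r+1) from qFact_succ q r]
  have n1 := qFact_ne hq r
  have n2 := qFact_ne hq (m - r - 1)
  have n3 : qInt q (r+1) ≠ 0 := by
    have := qFact_ne hq (r+1); rw [qFact_succ] at this
    exact fun h => this (by rw [h, mul_zero])
  have n4 : qInt q (m-r) ≠ 0 := by
    have := qFact_ne hq (m-r); rw [e3, qFact_succ, ← e3] at this
    exact fun h => this (by rw [h, mul_zero])
  field_simp
  rw [key]; ring

lemma qBinom_zero {q : ℝ} (hq : 1 < q) (m : ℕ) : qBinom q m 0 = 1 := by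
  unfold qBinom
  rw [show qFact q 0 = 1 from rfl]
  rw [Nat.sub_zero, one_mul, div_self (qFact_ne hq m)]

lemma qBinom_self {q : ℝ} (hq : 1 < q) (m : ℕ) : qBinom q m m = 1 := by
  unfold qBinom
  rw [Nat.sub_self, show qFact q 0 = 1 from rfl, mul_one, div_self (qFact_ne hq m)]

lemma gauss {q : ℝ} (hq : 1 < q) (m : ℕ) (x : ℝ) :
    q ^ m.choose 2 * qPoch x q⁻¹ m
      = ∑ r ∈ range (m+1), (-1:ℝ)^r * q^((m-r).choose 2) * qBinom q m r * x^r := by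
  have hq0 : q ≠ 0 := by linarith
  induction m with
  | zero => simp [qPoch, qBinom, qFact]
  | succ m ih =>
    have key : q ^ ((m+1).choose 2) * qPoch x q⁻¹ (m+1)
        = (q ^ m.choose 2 * qPoch x q⁻¹ m) * (q^m - x) := by
      rw [choose_two_succ, pow_add, show qPoch x q⁻¹ (m+1) = qPoch x q⁻¹ m * (1 - x * (q⁻¹)^m)
        from Finset.prod_range_succ _ m]
      have h1 : q^m * (1 - x * (q⁻¹)^m) = q^m - x := by
        rw [inv_pow]; field_simp
      calc q ^ m.choose 2 * q^m * (qPoch x q⁻¹ m * (1 - x * (q⁻¹)^m))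
          = q ^ m.choose 2 * qPoch x q⁻¹ m * (q^m * (1 - x * (q⁻¹)^m)) := by ring
        _ = _ := by rw [h1]
    rw [key, ih]
    set f : ℕ → ℝ := fun r => (-1:ℝ)^r * q^((m-r).choose 2) * qBinom q m r * x^r with hf
    set g : ℕ → ℝ := fun r => (-1:ℝ)^r * q^((m+1-r).choose 2) * qBinom q (m+1) r * x^r with hg
    have expand : (∑ r ∈ range (m+1), f r) * (q^m - x)
        = f 0 * q^m + (∑ r ∈ range m, (f (r+1) * q^m - f r * x)) - f m * x := by
      rw [mul_sub, Finset.sum_mul, Finset.sum_mul, Finset.sum_sub_distrib]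
      rw [Finset.sum_range_succ' (fun r => f r * q^m) m, Finset.sum_range_succ (fun r => f r * x) m]
      ring
    rw [expand]
    rw [Finset.sum_range_succ' g (m+1), Finset.sum_range_succ (fun r => g (r+1)) m]
    have h0 : g 0 = f 0 * q^m := by
      simp only [hf, hg, pow_zero, one_mul, mul_one, Nat.sub_zero]
      rw [qBinom_zero hq, qBinom_zero hq, choose_two_succ, pow_add]
      ring
    have hlast : g (m+1) = - (f m * x) := by
      simp only [hf, hg]
      rw [Nat.sub_self, show m - m = 0 from Nat.sub_self m,
        qBinom_self hq, qBinom_self hq]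
      simp [pow_succ]
      ring
    have hmid : ∀ r ∈ range m, g (r+1) = f (r+1) * q^m - f r * x := by
      intro r hr
      simp only [mem_range] at hr
      simp only [hf, hg]
      rw [show m+1-(r+1) = m - r from by omega, qPascal hq (by omega : r < m)]
      have e1 : (m - r).choose 2 + (r + 1) = (m - (r+1)).choose 2 + m := by
        have e2 : m - r = (m - (r+1)) + 1 := by omega
        rw [e2, choose_two_succ]
        omega
      have e3 : q^((m-r).choose 2) * q^(r+1) = q^((m-(r+1)).choose 2) * q^m := by
        rw [← pow_add, ← pow_add, e1]
      calc (-1:ℝ)^(r+1) * q^((m-r).choose 2) * (q^(r+1) * qBinom q m (r+1) + qBinom q m r) * x^(r+1)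
          = (-1:ℝ)^(r+1) * (q^((m-r).choose 2) * q^(r+1)) * qBinom q m (r+1) * x^(r+1)
            + (-1:ℝ)^(r+1) * q^((m-r).choose 2) * qBinom q m r * x^(r+1) := by ring
        _ = _ := by
            rw [e3]
            simp only [pow_succ]
            ring
    rw [Finset.sum_congr rfl hmid, h0, hlast]
    ring

lemma neg_one_pow_sub_real {r n : ℕ} (h : r ≤ n) : (-1:ℝ)^(n-r) = (-1)^n * (-1)^r := by
  have h2 : (-1:ℝ)^r * (-1)^r = 1 := by rw [← pow_add, ← two_mul, pow_mul]; norm_num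
  calc (-1:ℝ)^(n-r) = (-1)^(n-r) * ((-1)^r * (-1)^r) := by rw [h2, mul_one]
    _ = (-1)^(n-r+r) * (-1)^r := by rw [pow_add]; ring
    _ = (-1)^n * (-1)^r := by rw [show n - r + r = n from by omega]

lemma term_id {q : ℝ} (hq : 1 < q) (n d j r : ℕ) (hj : 1 ≤ j) (hjd : j + d ≤ n)
    (hrj : r + j ≤ n) (x : ℝ) :
    (-1:ℝ)^(n-r) * q^((n-r).choose 2) *
        (((1-q) * qInt q n / qFact q r) *
          (q^((j*r : ℤ) - d) * (qFact q (n-j) / qFact q (n-r-j)) *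
            qPoch (q^(n-d-j+1)) q (j-1))) * x^r
    = ((∏ i ∈ range n, (q^n - q^i)) *
        (q^(-(d:ℤ)) * ((qFact q (n-j) * qFact q (n-d-1)) / (qFact q (n-j-d) * qFact q (n-1))))) *
        (((-1:ℝ)^r * q^((n-j-r).choose 2) * qBinom q (n-j) r * x^r) /
          (q^((n-j).choose 2) * qPoch q q (n-j))) := by
  have hq0 : q ≠ 0 := by linarith
  have hq1 : (1:ℝ) - q ≠ 0 := by linarith
  rw [neg_one_pow_sub_real (by omega : r ≤ n), gl_prod hq, qPoch_q_q]
  obtain ⟨e, he⟩ : ∃ e, n - d - j = e := ⟨n - d - j, rfl⟩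
  obtain ⟨c, hc⟩ : ∃ c, n = r + j + c := ⟨n - r - j, by omega⟩
  obtain ⟨j', hj'⟩ : ∃ j', j = j' + 1 := ⟨j - 1, by omega⟩
  subst hj'
  subst hc
  have hde : d + e = r + c := by omega
  rw [show r + (j'+1) + c - r = j' + 1 + c from by omega,
      show r + (j'+1) + c - (j'+1) = r + c from by omega,
      show j' + 1 + c - (j'+1) = c from by omega,
      show r + (j'+1) + c - d - (j'+1) = e from by omega,
      show r + (j'+1) + c - d - 1 = j' + e from by omega,
      show r + c - d = e from by omega,
      show r + (j'+1) + c - 1 = r + j' + c from by omega,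
      show j' + 1 - 1 = j' from by omega]
  rw [qPoch_qpow hq e j']
  unfold qBinom
  rw [show r + c - r = c from by omega]
  rw [show qFact q (r + (j'+1) + c) = qFact q (r + j' + c) * qInt q (r + (j'+1) + c) by
    rw [show r + (j'+1) + c = (r + j' + c) + 1 from by omega, qFact_succ]]
  rw [zpow_sub₀ hq0, zpow_neg, zpow_natCast, ← Nat.cast_mul, zpow_natCast]
  rw [show j' + e = e + j' from by omega]
  rw [show (j'+1+c).choose 2 = (j'+1).choose 2 + c.choose 2 + (j'+1)*c from choose_two_add _ _,
      show (r+(j'+1)+c).choose 2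
          = r.choose 2 + (j'+1).choose 2 + r*(j'+1) + c.choose 2 + (r+(j'+1))*c from by
        rw [choose_two_add (r+(j'+1)) c, choose_two_add r (j'+1)],
      show (r+c).choose 2 = r.choose 2 + c.choose 2 + r*c from choose_two_add _ _]
  have hF1 := qFact_ne hq r
  have hF2 := qFact_ne hq c
  have hF3 := qFact_ne hq e
  have hF4 := qFact_ne hq (e + j')
  have hF5 := qFact_ne hq (r + j' + c)
  have hF6 := qFact_ne hq (r + c)
  field_simp
  ring

lemma per_j {q : ℝ} (hq : 1 < q) (n d j : ℕ) (hj : 1 ≤ j) (hjd : j + d ≤ n) (x : ℝ) :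
    ∑ r ∈ range (n - j + 1),
      (-1:ℝ)^(n-r) * q^((n-r).choose 2) *
          (((1-q) * qInt q n / qFact q r) *
            (q^((j*r : ℤ) - d) * (qFact q (n-j) / qFact q (n-r-j)) *
              qPoch (q^(n-d-j+1)) q (j-1))) * x^r
    = (∏ i ∈ range n, (q^n - q^i)) *
        (q^(-(d:ℤ)) * (((qFact q (n-j) * qFact q (n-d-1)) / (qFact q (n-j-d) * qFact q (n-1))) *
          (qPoch x q⁻¹ (n-j) / qPoch q q (n-j)))) := by
  have hq0 : q ≠ 0 := by linarith
  have hm : qPoch x q⁻¹ (n-j) / qPoch q q (n-j)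
      = ∑ r ∈ range ((n-j)+1),
          ((-1:ℝ)^r * q^((n-j-r).choose 2) * qBinom q (n-j) r * x^r) /
            (q^((n-j).choose 2) * qPoch q q (n-j)) := by
    rw [← Finset.sum_div, ← gauss hq (n-j) x,
      mul_div_mul_left _ _ (pow_ne_zero _ hq0)]
  calc ∑ r ∈ range (n - j + 1),
      (-1:ℝ)^(n-r) * q^((n-r).choose 2) *
          (((1-q) * qInt q n / qFact q r) *
            (q^((j*r : ℤ) - d) * (qFact q (n-j) / qFact q (n-r-j)) *
              qPoch (q^(n-d-j+1)) q (j-1))) * x^r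
      = ∑ r ∈ range ((n-j)+1),
          ((∏ i ∈ range n, (q^n - q^i)) *
            (q^(-(d:ℤ)) * ((qFact q (n-j) * qFact q (n-d-1)) / (qFact q (n-j-d) * qFact q (n-1))))) *
            (((-1:ℝ)^r * q^((n-j-r).choose 2) * qBinom q (n-j) r * x^r) /
              (q^((n-j).choose 2) * qPoch q q (n-j))) := by
        refine Finset.sum_congr rfl fun r hr => ?_
        simp only [mem_range] at hr
        exact term_id hq n d j r hj hjd (by omega) x
    _ = _ := by
        rw [← Finset.mul_sum, ← hm]
        ring


/-- Proposition 3.1: the expansion of the character generating function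
`f_{(1, ⟨d, n⟩)}(x)` in the basis `(x; q⁻¹)_m / (q; q)_m`. -/
theorem character_genfun_hook_expansion
    (q : ℝ) (hq : 1 < q) (n d : ℕ) (hn : 1 ≤ n) (hd : d ≤ n - 1) (x : ℝ) :
    ∑ r ∈ Finset.range (n + 1),
      (-1 : ℝ) ^ (n - r) * q ^ ((n - r) * (n - r - 1) / 2) *
        (qBinom q n r +
          ((1 - q) * qInt q n / qFact q r) *
            ∑ j ∈ Finset.Icc 1 (n - max r d),
              q ^ ((j * r : ℤ) - d) * (qFact q (n - j) / qFact q (n - r - j)) *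
                qPoch (q ^ (n - d - j + 1)) q (j - 1)) *
        x ^ r
    = (∏ i ∈ Finset.range n, ((q : ℝ) ^ n - q ^ i)) *
        (qPoch x q⁻¹ n / qPoch q q n +
          q ^ (-(d : ℤ)) *
            ∑ m ∈ Finset.Icc d (n - 1),
              ((qFact q m * qFact q (n - d - 1)) / (qFact q (m - d) * qFact q (n - 1))) *
                (qPoch x q⁻¹ m / qPoch q q m)) := by
  have hq0 : q ≠ 0 := by linarith
  have hdn : d + 1 ≤ n := by omega
  simp only [← Nat.choose_two_right]
  -- split each summand
  have split : ∀ r ∈ range (n+1),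
      (-1 : ℝ) ^ (n - r) * q ^ ((n - r).choose 2) *
        (qBinom q n r +
          ((1 - q) * qInt q n / qFact q r) *
            ∑ j ∈ Finset.Icc 1 (n - max r d),
              q ^ ((j * r : ℤ) - d) * (qFact q (n - j) / qFact q (n - r - j)) *
                qPoch (q ^ (n - d - j + 1)) q (j - 1))
        * x ^ r
      = (-1 : ℝ) ^ (n - r) * q ^ ((n - r).choose 2) * qBinom q n r * x ^ r
        + ∑ j ∈ Finset.Icc 1 (n - max r d),
            (-1 : ℝ) ^ (n - r) * q ^ ((n - r).choose 2) *
              (((1 - q) * qInt q n / qFact q r) *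
                (q ^ ((j * r : ℤ) - d) * (qFact q (n - j) / qFact q (n - r - j)) *
                  qPoch (q ^ (n - d - j + 1)) q (j - 1))) * x ^ r := by
    intro r _
    rw [mul_add, add_mul, Finset.mul_sum, Finset.mul_sum, Finset.sum_mul]
  rw [Finset.sum_congr rfl split, Finset.sum_add_distrib]
  -- first part
  have part1 : ∑ r ∈ range (n+1),
      (-1 : ℝ) ^ (n - r) * q ^ ((n - r).choose 2) * qBinom q n r * x ^ r
      = (∏ i ∈ range n, (q^n - q^i)) * (qPoch x q⁻¹ n / qPoch q q n) := by
    have h1 : ∀ r ∈ range (n+1),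
        (-1 : ℝ) ^ (n - r) * q ^ ((n - r).choose 2) * qBinom q n r * x ^ r
        = (-1:ℝ)^n * ((-1:ℝ)^r * q^((n-r).choose 2) * qBinom q n r * x^r) := by
      intro r hr
      simp only [mem_range] at hr
      rw [neg_one_pow_sub_real (by omega : r ≤ n)]
      ring
    rw [Finset.sum_congr rfl h1, ← Finset.mul_sum, ← gauss hq n x, gl_prod hq, qPoch_q_q]
    have := qFact_ne hq n
    have h2 : ((1:ℝ)-q)^n ≠ 0 := pow_ne_zero _ (by linarith)
    field_simp
  rw [part1]
  -- second part: swap sums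
  have swap : ∑ r ∈ range (n+1),
      ∑ j ∈ Finset.Icc 1 (n - max r d),
        (-1 : ℝ) ^ (n - r) * q ^ ((n - r).choose 2) *
          (((1 - q) * qInt q n / qFact q r) *
            (q ^ ((j * r : ℤ) - d) * (qFact q (n - j) / qFact q (n - r - j)) *
              qPoch (q ^ (n - d - j + 1)) q (j - 1))) * x ^ r
      = ∑ j ∈ Finset.Icc 1 (n - d), ∑ r ∈ range (n - j + 1),
          (-1 : ℝ) ^ (n - r) * q ^ ((n - r).choose 2) *
            (((1 - q) * qInt q n / qFact q r) *
              (q ^ ((j * r : ℤ) - d) * (qFact q (n - j) / qFact q (n - r - j)) *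
                qPoch (q ^ (n - d - j + 1)) q (j - 1))) * x ^ r := by
    have stepA : ∀ r ∈ range (n+1),
        (∑ j ∈ Finset.Icc 1 (n - max r d),
          (-1 : ℝ) ^ (n - r) * q ^ ((n - r).choose 2) *
            (((1 - q) * qInt q n / qFact q r) *
              (q ^ ((j * r : ℤ) - d) * (qFact q (n - j) / qFact q (n - r - j)) *
                qPoch (q ^ (n - d - j + 1)) q (j - 1))) * x ^ r)
        = ∑ j ∈ Finset.Icc 1 (n - d),
            (if r + j ≤ n then
              (-1 : ℝ) ^ (n - r) * q ^ ((n - r).choose 2) *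
                (((1 - q) * qInt q n / qFact q r) *
                  (q ^ ((j * r : ℤ) - d) * (qFact q (n - j) / qFact q (n - r - j)) *
                    qPoch (q ^ (n - d - j + 1)) q (j - 1))) * x ^ r
            else 0) := by
      intro r hr
      simp only [mem_range] at hr
      refine (Finset.sum_congr rfl ?_).trans (Finset.sum_subset ?_ ?_)
      · intro j hj
        simp only [Finset.mem_Icc] at hj
        rw [if_pos (by omega)]
      · intro j hj
        simp only [Finset.mem_Icc] at *
        omega
      · intro j hj hnj
        simp only [Finset.mem_Icc] at hj hnj
        rw [if_neg (by omega)]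
    rw [Finset.sum_congr rfl stepA, Finset.sum_comm]
    refine Finset.sum_congr rfl fun j hj => ?_
    simp only [Finset.mem_Icc] at hj
    refine (Finset.sum_subset ?_ ?_).symm.trans (Finset.sum_congr rfl ?_)
    · intro r hrm
      simp only [mem_range] at *
      omega
    · intro r hrm hnr
      simp only [mem_range] at hrm hnr
      rw [if_neg (by omega)]
    · intro r hrm
      simp only [mem_range] at hrm
      rw [if_pos (by omega)]
  rw [swap]
  have perj : ∀ j ∈ Finset.Icc 1 (n - d),
      ∑ r ∈ range (n - j + 1),
          (-1 : ℝ) ^ (n - r) * q ^ ((n - r).choose 2) *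
            (((1 - q) * qInt q n / qFact q r) *
              (q ^ ((j * r : ℤ) - d) * (qFact q (n - j) / qFact q (n - r - j)) *
                qPoch (q ^ (n - d - j + 1)) q (j - 1))) * x ^ r
      = (∏ i ∈ range n, (q^n - q^i)) *
          (q^(-(d:ℤ)) * (((qFact q (n-j) * qFact q (n-d-1)) / (qFact q (n-j-d) * qFact q (n-1))) *
            (qPoch x q⁻¹ (n-j) / qPoch q q (n-j)))) := by
    intro j hj
    simp only [Finset.mem_Icc] at hj
    exact per_j hq n d j hj.1 (by omega) x
  rw [Finset.sum_congr rfl perj]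
  -- reindex j ↦ n - j
  have reindex : ∑ j ∈ Finset.Icc 1 (n - d),
      (∏ i ∈ range n, (q^n - q^i)) *
          (q^(-(d:ℤ)) * (((qFact q (n-j) * qFact q (n-d-1)) / (qFact q (n-j-d) * qFact q (n-1))) *
            (qPoch x q⁻¹ (n-j) / qPoch q q (n-j))))
      = ∑ m ∈ Finset.Icc d (n-1),
          (∏ i ∈ range n, (q^n - q^i)) *
            (q^(-(d:ℤ)) * (((qFact q m * qFact q (n-d-1)) / (qFact q (m-d) * qFact q (n-1))) *
              (qPoch x q⁻¹ m / qPoch q q m))) := by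
    refine Finset.sum_nbij' (fun j => n - j) (fun m => n - m) ?_ ?_ ?_ ?_ ?_
    · intro a ha; simp only [Finset.mem_Icc] at *; omega
    · intro a ha; simp only [Finset.mem_Icc] at *; omega
    · intro a ha; simp only [Finset.mem_Icc] at ha; omega
    · intro a ha; simp only [Finset.mem_Icc] at ha; omega
    · intro a ha; simp only [Finset.mem_Icc] at ha
      dsimp only
  rw [reindex]
  conv_rhs => rw [mul_add, Finset.mul_sum, Finset.mul_sum]
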